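/- Let F ∈ R[x₁,…,xₙ] be a quasiconvex polynomial, a ∈ R^n a fixed point, and b ∈ R^n a nonzero fixed vector. If the univariate polynomial λ ↦ F(a + λb) is strictly decreasing on R, then for every x ∈ R^n the polynomial λ ↦ F(x + λb) is strictly decreasing on R. -/

import Mathlib

open Filter Polynomial


lemma poly_exists_le (p : Polynomial ℝ) (h : StrictAnti fun t : ℝ => p.eval t) (α : ℝ) :
    ∃ t : ℝ, p.eval t ≤ α := by
  by_cases hdeg : 0 < p.degree
  · have habs := p.abs_tendsto_atTop hdeg
    obtain ⟨t, ht1, ht2⟩ := ((habs.eventually_ge_atTop (|p.eval 0| + |α| + 1)).and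
      (eventually_ge_atTop (1:ℝ))).exists
    have hlt : p.eval t < p.eval 0 := h (by linarith)
    refine ⟨t, ?_⟩
    rcases abs_cases (p.eval t) with ⟨h1, h2⟩ | ⟨h1, h2⟩ <;>
      rcases abs_cases (p.eval 0) with ⟨h3, h4⟩ | ⟨h3, h4⟩ <;>
      rcases abs_cases α with ⟨h5, h6⟩ | ⟨h5, h6⟩ <;> linarith
  · push_neg at hdeg
    have hlt := h (zero_lt_one (α := ℝ))
    rw [Polynomial.eq_C_of_degree_le_zero hdeg] at hlt
    simp only [Polynomial.eval_C] at hlt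
    exact absurd hlt (lt_irrefl _)

lemma poly_exists_ge (p : Polynomial ℝ) (h : StrictAnti fun t : ℝ => p.eval t) (α : ℝ) :
    ∃ t : ℝ, α ≤ p.eval t := by
  have hsa : StrictAnti fun t : ℝ => (-(p.comp (-Polynomial.X))).eval t := by
    intro s t hst
    have h2 := h (neg_lt_neg hst)
    simp only at h2
    simp only [Polynomial.eval_neg, Polynomial.eval_comp, Polynomial.eval_X]
    linarith
  obtain ⟨t, ht⟩ := poly_exists_le _ hsa (-α)
  refine ⟨-t, ?_⟩
  simp only [Polynomial.eval_neg, Polynomial.eval_comp, Polynomial.eval_X] at ht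
  linarith


open MvPolynomial

theorem stmt3 {n : ℕ} (F : MvPolynomial (Fin n) ℝ)
    (hq : ∀ α : ℝ, Convex ℝ {x : Fin n → ℝ | eval x F ≤ α})
    (a b : Fin n → ℝ) (hb : b ≠ 0)
    (hdec : StrictAnti fun l : ℝ => eval (a + l • b) F) :
    ∀ x : Fin n → ℝ, StrictAnti fun l : ℝ => eval (x + l • b) F := by
  classical
  set P : (Fin n → ℝ) → Polynomial ℝ := fun x =>
    MvPolynomial.aeval (fun i => Polynomial.C (x i) + Polynomial.C (b i) * Polynomial.X) F with hPdef
  have hP : ∀ (x : Fin n → ℝ) (l : ℝ), (P x).eval l = eval (x + l • b) F := by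
    intro x l
    have h1 : (P x).eval l = Polynomial.aeval l (P x) := by
      rw [Polynomial.coe_aeval_eq_eval]
    rw [h1, hPdef]
    rw [← AlgHom.comp_apply, MvPolynomial.comp_aeval]
    have h2 : (fun i => Polynomial.aeval l
        (Polynomial.C (x i) + Polynomial.C (b i) * Polynomial.X)) = fun i => (x + l • b) i := by
      funext i
      simp only [map_add, map_mul, Polynomial.aeval_C, Polynomial.aeval_X, Pi.add_apply,
        Pi.smul_apply, smul_eq_mul, Algebra.algebraMap_self, RingHom.id_apply]
      ring
    rw [h2]
    rw [← MvPolynomial.coe_aeval_eq_eval]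
    rfl
  have hcont : Continuous fun y : Fin n → ℝ => eval y F := MvPolynomial.continuous_eval F
  have hPa : StrictAnti fun l : ℝ => (P a).eval l := by
    intro s t hst
    simp only [hP]
    exact hdec hst
  have hB : ∀ (x : Fin n → ℝ) (l1 l2 : ℝ), l1 ≤ l2 →
      eval (x + l2 • b) F ≤ eval (x + l1 • b) F := by
    intro x l1 l2 hle
    rcases eq_or_lt_of_le hle with rfl | hlt
    · exact le_refl _
    set u : Fin n → ℝ := x + l1 • b with hu
    set d : ℝ := l2 - l1 with hd
    have hd0 : 0 < d := by simp only [hd]; linarith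
    set c : ℝ := eval u F with hc
    obtain ⟨t0, ht0⟩ := poly_exists_le (P a) hPa c
    rw [hP] at ht0
    have hseg : ∀ t : ℝ, max t0 (max d 1) ≤ t →
        eval ((1 - d / t) • u + (d / t) • (a + t • b)) F ≤ c := by
      intro t ht
      have htpos : (0:ℝ) < t :=
        lt_of_lt_of_le one_pos (le_trans (le_trans (le_max_right _ _) (le_max_right _ _)) ht)
      have htd : d ≤ t := le_trans (le_trans (le_max_left _ _) (le_max_right _ _)) ht
      have hs0 : 0 ≤ d / t := by positivity
      have hs1 : d / t ≤ 1 := by rw [div_le_one htpos]; exact htd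
      have hmemu : u ∈ {y : Fin n → ℝ | eval y F ≤ c} := le_of_eq hc.symm
      have hmemt : (a + t • b) ∈ {y : Fin n → ℝ | eval y F ≤ c} := by
        have h1 : eval (a + t • b) F ≤ eval (a + t0 • b) F := by
          rcases eq_or_lt_of_le (le_trans (le_max_left _ _) ht : t0 ≤ t) with rfl | h
          · exact le_refl _
          · exact le_of_lt (hdec h)
        exact le_trans h1 ht0
      exact hq c hmemu hmemt (show (0:ℝ) ≤ 1 - d / t by linarith)
        (show (0:ℝ) ≤ d / t from hs0) (show (1 - d / t) + d / t = 1 by ring)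
    have hlim : Tendsto (fun t : ℝ => (1 - d / t) • u + (d / t) • (a + t • b))
        atTop (nhds (u + d • b)) := by
      have heq : (fun t : ℝ => u + (d / t) • (a - u) + d • b)
          =ᶠ[atTop] (fun t : ℝ => (1 - d / t) • u + (d / t) • (a + t • b)) := by
        filter_upwards [eventually_gt_atTop (0:ℝ)] with t ht
        have htne : t ≠ 0 := ne_of_gt ht
        funext i
        simp only [Pi.add_apply, Pi.smul_apply, Pi.sub_apply, smul_eq_mul]
        field_simp
        ring
      have hdiv : Tendsto (fun t : ℝ => d / t) atTop (nhds 0) := by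
        simpa [div_eq_mul_inv] using tendsto_inv_atTop_zero.const_mul d
      have h2 : Tendsto (fun t : ℝ => u + (d / t) • (a - u) + d • b)
          atTop (nhds (u + (0:ℝ) • (a - u) + d • b)) :=
        (tendsto_const_nhds.add (hdiv.smul_const (a - u))).add tendsto_const_nhds
      rw [show u + (0:ℝ) • (a - u) + d • b = u + d • b by simp] at h2
      exact Tendsto.congr' heq h2
    have hfin : eval (u + d • b) F ≤ c := by
      refine le_of_tendsto ((hcont.tendsto (u + d • b)).comp hlim) ?_
      filter_upwards [eventually_ge_atTop (max t0 (max d 1))] with t ht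
      exact hseg t ht
    have hx2 : u + d • b = x + l2 • b := by
      rw [hu, hd]
      funext i
      simp only [Pi.add_apply, Pi.smul_apply, smul_eq_mul]
      ring
    rw [hx2] at hfin
    exact hfin
  intro x l1 l2 hlt
  simp only
  by_contra hcon
  push_neg at hcon
  have heq : eval (x + l2 • b) F = eval (x + l1 • b) F :=
    le_antisymm (hB x l1 l2 (le_of_lt hlt)) hcon
  set c : ℝ := eval (x + l1 • b) F with hc
  have hconst : P x = Polynomial.C c := by
    apply Polynomial.eq_of_infinite_eval_eq
    have hsub : Set.Icc l1 l2 ⊆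
        {l : ℝ | Polynomial.eval l (P x) = Polynomial.eval l (Polynomial.C c)} := by
      intro l hl
      simp only [Set.mem_setOf_eq, Polynomial.eval_C, hP]
      refine le_antisymm (hB x l1 l hl.1) ?_
      rw [← heq]
      exact hB x l l2 hl.2
    exact (Set.Icc_infinite hlt).mono hsub
  have pline : ∀ l : ℝ, eval (x + l • b) F = c := by
    intro l
    rw [← hP, hconst, Polynomial.eval_C]
  obtain ⟨t0, ht0⟩ := poly_exists_le (P a) hPa c
  rw [hP] at ht0
  have hline : ∀ t : ℝ, eval (a + t • b) F ≤ c := by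
    intro t
    set l' : ℝ := t - t0 with hl'
    have key : ∀ μ : ℝ, μ ∈ Set.Ioo (0:ℝ) 1 →
        eval ((1 - μ) • (a + t0 • b) + μ • (x + (l' / μ) • b)) F ≤ c := by
      intro μ hμ
      exact hq c ht0 (le_of_eq (pline (l' / μ)))
        (show (0:ℝ) ≤ 1 - μ by linarith [hμ.2]) (le_of_lt hμ.1)
        (show (1 - μ) + μ = 1 by ring)
    have heq2 : ∀ μ : ℝ, μ ∈ Set.Ioo (0:ℝ) 1 →
        (1 - μ) • (a + t0 • b) + μ • (x + (l' / μ) • b)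
          = (1 - μ) • (a + t0 • b) + μ • x + l' • b := by
      intro μ hμ
      have hμne : μ ≠ 0 := ne_of_gt hμ.1
      funext i
      simp only [Pi.add_apply, Pi.smul_apply, smul_eq_mul]
      field_simp
      ring
    have hμ0 : Tendsto (fun μ : ℝ => μ) (nhdsWithin 0 (Set.Ioi (0:ℝ))) (nhds 0) :=
      tendsto_id.mono_left nhdsWithin_le_nhds
    have hlim : Tendsto (fun μ : ℝ => (1 - μ) • (a + t0 • b) + μ • x + l' • b)
        (nhdsWithin 0 (Set.Ioi (0:ℝ))) (nhds (a + t • b)) := by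
      have h2 : Tendsto (fun μ : ℝ => (1 - μ) • (a + t0 • b) + μ • x + l' • b)
          (nhdsWithin 0 (Set.Ioi (0:ℝ)))
          (nhds ((1 - (0:ℝ)) • (a + t0 • b) + (0:ℝ) • x + l' • b)) :=
        (((tendsto_const_nhds.sub hμ0).smul_const (a + t0 • b)).add
          (hμ0.smul_const x)).add tendsto_const_nhds
      have h3 : (1 - (0:ℝ)) • (a + t0 • b) + (0:ℝ) • x + l' • b = a + t • b := by
        funext i
        simp only [Pi.add_apply, Pi.smul_apply, smul_eq_mul, hl']
        ring
      rwa [h3] at h2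
    refine le_of_tendsto ((hcont.tendsto (a + t • b)).comp hlim) ?_
    filter_upwards [Ioo_mem_nhdsGT_of_mem
      (show (0:ℝ) ∈ Set.Ico (0:ℝ) 1 from ⟨le_refl 0, one_pos⟩)] with μ hμ
    have := key μ hμ
    rw [heq2 μ hμ] at this
    exact this
  obtain ⟨t, ht⟩ := poly_exists_ge (P a) hPa (c + 1)
  rw [hP] at ht
  linarith [hline t]
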